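/- For every p ∈ [1,∞), every T ∈ (0,∞), every N ∈ ℕ with N ≥ 1 (writing Δt = T/N) and every n ∈ {0,…,N}, one has (𝔼[‖X_n^{ε,Δt} − X_n^{0,Δt}‖^p])^{1/p} → 0 as ε → 0. -/

import Mathlib

open MeasureTheory ProbabilityTheory Real Set Filter

/-- Pathwise representation of the Ornstein--Uhlenbeck process
`m^ε(t) = e^{−t/ε²} m₀ + ε⁻¹ β(t) − ε⁻³ ∫₀ᵗ e^{−(t−s)/ε²} β(s) ds`. -/
noncomputable def mOU {Ω : Type*} (β : ℝ → Ω → ℝ) (ε m0 t : ℝ) (ω : Ω) : ℝ :=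
  Real.exp (-(t / ε ^ 2)) * m0 + ε⁻¹ * β t ω
    - (ε ^ 3)⁻¹ * ∫ s in (0:ℝ)..t, Real.exp (-((t - s) / ε ^ 2)) * β s ω

/-- `ζ^ε(t) = ε⁻¹ ∫₀ᵗ m^ε(s) ds`. -/
noncomputable def zetaOU {Ω : Type*} (β : ℝ → Ω → ℝ) (ε m0 t : ℝ) (ω : Ω) : ℝ :=
  ε⁻¹ * ∫ s in (0:ℝ)..t, mOU β ε m0 s ω

lemma integrable_exp_mul_exp_neg_sq' (c m : ℝ) {v : ℝ} (hv : 0 < v) :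
    Integrable (fun x => Real.exp (c * x) * Real.exp (-(x - m) ^ 2 / (2 * v))) := by
  have hb : (0:ℝ) < (2 * v)⁻¹ := by positivity
  have h := (((integrable_exp_neg_mul_sq hb).comp_sub_right (m + c * v)).const_mul
    (Real.exp (c * m + c ^ 2 * v / 2)))
  refine h.congr (Filter.Eventually.of_forall fun x => ?_)
  simp only [← Real.exp_add]
  congr 1
  field_simp
  ring

lemma integrable_exp_mul_abs_gaussianReal' (a m : ℝ) {v : NNReal} (hv : v ≠ 0) :
    Integrable (fun x => Real.exp (a * |x|)) (gaussianReal m v) := by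
  have hv' : (0:ℝ) < (v:ℝ) := by positivity
  rw [gaussianReal_of_var_ne_zero m hv,
    integrable_withDensity_iff (measurable_gaussianPDF m v)
      (Filter.Eventually.of_forall fun x => ENNReal.ofReal_lt_top)]
  have h1 := integrable_exp_mul_exp_neg_sq' |a| m hv'
  have h2 := integrable_exp_mul_exp_neg_sq' (-|a|) m hv'
  have h := ((h1.add h2).const_mul (Real.sqrt (2 * Real.pi * v))⁻¹)
  refine h.mono' ?_ (Filter.Eventually.of_forall fun x => ?_)
  · exact ((Real.continuous_exp.comp (continuous_const.mul continuous_abs)).measurable.mul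
      (measurable_gaussianPDF m v).ennreal_toReal).aestronglyMeasurable
  · have hpdf : ((gaussianPDF m v x).toReal) = gaussianPDFReal m v x :=
      ENNReal.toReal_ofReal (gaussianPDFReal_nonneg m v x)
    have hnn : 0 ≤ Real.exp (a * |x|) * (gaussianPDF m v x).toReal := by
      positivity
    rw [Real.norm_of_nonneg hnn, hpdf, gaussianPDFReal]
    have hkey : Real.exp (a * |x|) ≤ Real.exp (|a| * x) + Real.exp (-|a| * x) := by
      rcases le_or_gt 0 x with hx | hx
      · rw [abs_of_nonneg hx]
        refine le_add_of_le_of_nonneg (Real.exp_le_exp.mpr ?_) (Real.exp_pos _).le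
        exact mul_le_mul_of_nonneg_right (le_abs_self a) hx
      · rw [abs_of_neg hx]
        refine le_add_of_nonneg_of_le (Real.exp_pos _).le (Real.exp_le_exp.mpr ?_)
        nlinarith [le_abs_self a, neg_abs_le a]
    calc Real.exp (a * |x|) * ((Real.sqrt (2 * Real.pi * v))⁻¹ * Real.exp (-(x - m) ^ 2 / (2 * v)))
        ≤ (Real.exp (|a| * x) + Real.exp (-|a| * x))
            * ((Real.sqrt (2 * Real.pi * v))⁻¹ * Real.exp (-(x - m) ^ 2 / (2 * v))) := by
          refine mul_le_mul_of_nonneg_right hkey (by positivity)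
      _ = (Real.sqrt (2 * Real.pi * v))⁻¹
            * (Real.exp (|a| * x) * Real.exp (-(x - m) ^ 2 / (2 * v))
              + Real.exp (-|a| * x) * Real.exp (-(x - m) ^ 2 / (2 * v))) := by ring


set_option maxHeartbeats 2000000 in
/-- **Proposition (convergence of the scheme to the limiting scheme).** For every `p ∈ [1,∞)`,
`T ∈ (0,∞)`, `N ≥ 1` (with `Δt = T/N`) and every `n ∈ {0,…,N}`, one has
`(𝔼[‖X_n^{ε,Δt} − X_n^{0,Δt}‖^p])^{1/p} → 0` as `ε → 0`. -/
theorem scheme_converges_to_limiting_scheme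
    {d : ℕ} {Ω : Type*} [MeasurableSpace Ω] (P : Measure Ω) [IsProbabilityMeasure P]
    (σ : EuclideanSpace ℝ (Fin d) → EuclideanSpace ℝ (Fin d))
    (hσ : ContDiff ℝ 3 σ) (Cσ : ℝ)
    (hσbd : ∀ k : ℕ, k ≤ 3 → ∀ x, ‖iteratedFDeriv ℝ k σ x‖ ≤ Cσ)
    (φ : ℝ → EuclideanSpace ℝ (Fin d) → EuclideanSpace ℝ (Fin d))
    (hφ0 : ∀ x, φ 0 x = x)
    (hφd : ∀ (t : ℝ) (x : EuclideanSpace ℝ (Fin d)),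
      HasDerivAt (fun s => φ s x) (σ (φ t x)) t)
    (Φ : ℝ → EuclideanSpace ℝ (Fin d) → EuclideanSpace ℝ (Fin d))
    (hΦreg : ContDiff ℝ 3 (fun q : ℝ × EuclideanSpace ℝ (Fin d) => Φ q.1 q.2))
    (C : ℝ) (hCpos : 0 < C)
    (hΦord : ∀ (t : ℝ) x, ‖Φ t x - φ t x‖ ≤ C * |t| ^ 3 * Real.exp (C * |t|))
    (hΦlip : ∀ (t₁ t₂ : ℝ) (x₁ x₂ : EuclideanSpace ℝ (Fin d)),
      ‖Φ t₂ x₂ - Φ t₁ x₁‖ ≤ C * (|t₂ - t₁| + ‖x₂ - x₁‖) * Real.exp (C * (|t₁| + |t₂|)))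
    (hΦder : ∀ k : ℕ, k ≤ 3 → ∀ (t : ℝ) (x : EuclideanSpace ℝ (Fin d)),
      ‖iteratedFDeriv ℝ k (fun q : ℝ × EuclideanSpace ℝ (Fin d) => Φ q.1 q.2) (t, x)‖
        ≤ C * Real.exp (C * |t|))
    (β : ℝ → Ω → ℝ)
    (hβmeas : ∀ t, Measurable (β t))
    (hβ0 : ∀ ω, β 0 ω = 0)
    (hβcont : ∀ᵐ ω ∂P, Continuous fun t => β t ω)
    (hβgauss : ∀ s t : ℝ, 0 ≤ s → s ≤ t →
      Measure.map (fun ω => β t ω - β s ω) P = gaussianReal 0 (Real.toNNReal (t - s)))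
    (hβindep : ∀ (n : ℕ) (u : ℕ → ℝ), Monotone u → 0 ≤ u 0 →
      iIndepFun
        (fun (i : Fin n) (ω : Ω) => β (u (i.1 + 1)) ω - β (u i.1) ω) P)
    (ε₀ : ℝ) (hε₀ : 0 < ε₀)
    (m0 : ℝ → ℝ) (M0 : ℝ) (hm0 : ∀ ε ∈ Ioo (0:ℝ) ε₀, |m0 ε| ≤ M0)
    (x0 : ℝ → EuclideanSpace ℝ (Fin d)) (x00 : EuclideanSpace ℝ (Fin d))
    (hx0 : Tendsto x0 (nhdsWithin 0 (Ioo (0:ℝ) ε₀)) (nhds x00))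
    (T : ℝ) (hT : 0 < T) (N : ℕ) (hN : 1 ≤ N)
    -- the scheme, for each value of `ε`
    (mD : ℝ → ℕ → Ω → ℝ) (XD : ℝ → ℕ → Ω → EuclideanSpace ℝ (Fin d))
    (hmD0 : ∀ ε ∈ Ioo (0:ℝ) ε₀, ∀ ω, mD ε 0 ω = m0 ε)
    (hmD : ∀ ε ∈ Ioo (0:ℝ) ε₀, ∀ (n : ℕ) ω, mD ε (n + 1) ω =
      (mD ε n ω + (β (((n : ℝ) + 1) * (T / N)) ω - β ((n : ℝ) * (T / N)) ω) / ε)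
        / (1 + (T / N) / ε ^ 2))
    (hXD0 : ∀ ε ∈ Ioo (0:ℝ) ε₀, ∀ ω, XD ε 0 ω = x0 ε)
    (hXD : ∀ ε ∈ Ioo (0:ℝ) ε₀, ∀ (n : ℕ) ω,
      XD ε (n + 1) ω = Φ ((T / N) * mD ε (n + 1) ω / ε) (XD ε n ω))
    -- the limiting scheme
    (XD0 : ℕ → Ω → EuclideanSpace ℝ (Fin d))
    (hXD00 : ∀ ω, XD0 0 ω = x00)
    (hXD0rec : ∀ (n : ℕ) ω, XD0 (n + 1) ω =
      Φ (β (((n : ℝ) + 1) * (T / N)) ω - β ((n : ℝ) * (T / N)) ω) (XD0 n ω))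
    (p : ℝ) (hp : 1 ≤ p) (n : ℕ) (hn : n ≤ N) :
    Tendsto (fun ε : ℝ => (∫ ω, ‖XD ε n ω - XD0 n ω‖ ^ p ∂P) ^ (1 / p))
      (nhdsWithin 0 (Ioo (0:ℝ) ε₀)) (nhds 0) := by
  have hp0 : (0:ℝ) < p := lt_of_lt_of_le one_pos hp
  set l : Filter ℝ := nhdsWithin 0 (Ioo (0:ℝ) ε₀) with hl
  have hNpos : (0:ℝ) < (N : ℝ) := by exact_mod_cast Nat.pos_of_ne_zero (by omega)
  have hΔt : (0:ℝ) < T / N := div_pos hT hNpos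
  obtain ⟨Δβ, hΔβ⟩ : ∃ f : ℕ → Ω → ℝ, ∀ k ω,
      f k ω = β (((k : ℝ) + 1) * (T / N)) ω - β ((k : ℝ) * (T / N)) ω :=
    ⟨_, fun _ _ => rfl⟩
  obtain ⟨S, hS⟩ : ∃ f : Ω → ℝ, ∀ ω, f ω = ∑ k ∈ Finset.range N, |Δβ k ω| :=
    ⟨_, fun _ => rfl⟩
  obtain ⟨B, hB⟩ : ∃ f : Ω → ℝ, ∀ ω, f ω = ε₀ * M0 + S ω := ⟨_, fun _ => rfl⟩
  have hM0 : 0 ≤ M0 :=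
    le_trans (abs_nonneg _) (hm0 (ε₀ / 2) ⟨half_pos hε₀, half_lt_self hε₀⟩)
  have hS0 : ∀ ω, 0 ≤ S ω := fun ω => by
    rw [hS]; exact Finset.sum_nonneg fun k _ => abs_nonneg _
  have hB0 : ∀ ω, 0 ≤ B ω := fun ω => by
    rw [hB]; exact add_nonneg (by positivity) (hS0 ω)
  have hΦc : Continuous fun q : ℝ × EuclideanSpace ℝ (Fin d) => Φ q.1 q.2 :=
    hΦreg.continuous
  have hΔβm : ∀ k, Measurable (Δβ k) := by
    intro k
    have h : Δβ k = fun ω => β (((k : ℝ) + 1) * (T / N)) ω - β ((k : ℝ) * (T / N)) ω :=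
      funext (hΔβ k)
    rw [h]; exact (hβmeas _).sub (hβmeas _)
  have hmem : ∀ᶠ ε in l, ε ∈ Ioo (0:ℝ) ε₀ := self_mem_nhdsWithin
  -- measurability of the schemes
  have hmDm : ∀ ε ∈ Ioo (0:ℝ) ε₀, ∀ k, Measurable (mD ε k) := by
    intro ε hε k
    induction k with
    | zero =>
      have h : mD ε 0 = fun _ => m0 ε := funext (hmD0 ε hε)
      rw [h]; exact measurable_const
    | succ k ih =>
      have h : mD ε (k + 1) = fun ω =>
          (mD ε k ω + (β (((k : ℝ) + 1) * (T / N)) ω - β ((k : ℝ) * (T / N)) ω) / ε)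
            / (1 + (T / N) / ε ^ 2) := funext (hmD ε hε k)
      rw [h]
      exact (ih.add (((hβmeas _).sub (hβmeas _)).div_const ε)).div_const _
  have hXD0m : ∀ k, Measurable (XD0 k) := by
    intro k
    induction k with
    | zero =>
      have h : XD0 0 = fun _ => x00 := funext hXD00
      rw [h]; exact measurable_const
    | succ k ih =>
      have h : XD0 (k + 1) = fun ω =>
          Φ (β (((k : ℝ) + 1) * (T / N)) ω - β ((k : ℝ) * (T / N)) ω) (XD0 k ω) :=
        funext (hXD0rec k)
      rw [h]
      exact hΦc.measurable.comp (((hβmeas _).sub (hβmeas _)).prodMk ih)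
  have hXDm : ∀ ε ∈ Ioo (0:ℝ) ε₀, ∀ k, Measurable (XD ε k) := by
    intro ε hε k
    induction k with
    | zero =>
      have h : XD ε 0 = fun _ => x0 ε := funext (hXD0 ε hε)
      rw [h]; exact measurable_const
    | succ k ih =>
      have h : XD ε (k + 1) = fun ω => Φ ((T / N) * mD ε (k + 1) ω / ε) (XD ε k ω) :=
        funext (hXD ε hε k)
      rw [h]
      exact hΦc.measurable.comp
        ((((hmDm ε hε (k + 1)).const_mul (T / N)).div_const ε).prodMk ih)
  -- the two key algebraic identities
  have I2 : ∀ ε ∈ Ioo (0:ℝ) ε₀, ∀ k ω,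
      ε * mD ε (k + 1) ω = (ε * mD ε k ω + Δβ k ω) * (ε ^ 2 / (ε ^ 2 + T / N)) := by
    intro ε hε k ω
    have hεne : ε ≠ 0 := ne_of_gt hε.1
    have hden : ε ^ 2 + T / N ≠ 0 := by positivity
    rw [hmD ε hε k ω, hΔβ k ω]
    field_simp
  have I1 : ∀ ε ∈ Ioo (0:ℝ) ε₀, ∀ k ω,
      (T / N) * mD ε (k + 1) ω / ε = (ε * mD ε k ω + Δβ k ω) * ((T / N) / (ε ^ 2 + T / N)) := by
    intro ε hε k ω
    have hεne : ε ≠ 0 := ne_of_gt hε.1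
    have hden : ε ^ 2 + T / N ≠ 0 := by positivity
    rw [hmD ε hε k ω, hΔβ k ω]
    field_simp
  -- uniform bound on `ε * |mD ε k|`
  have hEm : ∀ ε ∈ Ioo (0:ℝ) ε₀, ∀ ω k,
      ε * |mD ε k ω| ≤ ε₀ * M0 + ∑ j ∈ Finset.range k, |Δβ j ω| := by
    intro ε hε ω k
    induction k with
    | zero =>
      rw [hmD0 ε hε ω]
      simp only [Finset.range_zero, Finset.sum_empty, add_zero]
      exact mul_le_mul hε.2.le (hm0 ε hε) (abs_nonneg _) hε₀.le
    | succ k ih =>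
      have hfac : ε ^ 2 / (ε ^ 2 + T / N) ≤ 1 :=
        div_le_one_of_le₀ (by linarith) (by positivity)
      calc ε * |mD ε (k + 1) ω| = |ε * mD ε (k + 1) ω| := by
            rw [abs_mul, abs_of_pos hε.1]
        _ = |ε * mD ε k ω + Δβ k ω| * (ε ^ 2 / (ε ^ 2 + T / N)) := by
            rw [I2 ε hε k ω, abs_mul,
              abs_of_nonneg (by positivity : (0:ℝ) ≤ ε ^ 2 / (ε ^ 2 + T / N))]
        _ ≤ |ε * mD ε k ω + Δβ k ω| * 1 :=
            mul_le_mul_of_nonneg_left hfac (abs_nonneg _)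
        _ ≤ ε * |mD ε k ω| + |Δβ k ω| := by
            rw [mul_one]
            refine (abs_add_le _ _).trans ?_
            rw [abs_mul, abs_of_pos hε.1]
        _ ≤ (ε₀ * M0 + ∑ j ∈ Finset.range k, |Δβ j ω|) + |Δβ k ω| :=
            add_le_add_left ih _
        _ = ε₀ * M0 + ∑ j ∈ Finset.range (k + 1), |Δβ j ω| := by
            rw [Finset.sum_range_succ]; ring
  have hsumS : ∀ ω k, k ≤ N → ∑ j ∈ Finset.range k, |Δβ j ω| ≤ S ω := by
    intro ω k hk
    rw [hS]
    exact Finset.sum_le_sum_of_subset_of_nonneg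
      (Finset.range_subset_range.mpr hk) (fun i _ _ => abs_nonneg _)
  -- bound on the time argument
  have htb : ∀ ε ∈ Ioo (0:ℝ) ε₀, ∀ ω k, k < N → |(T / N) * mD ε (k + 1) ω / ε| ≤ B ω := by
    intro ε hε ω k hk
    have hfac : (T / N) / (ε ^ 2 + T / N) ≤ 1 :=
      div_le_one_of_le₀ (by nlinarith) (by positivity)
    calc |(T / N) * mD ε (k + 1) ω / ε|
        = |ε * mD ε k ω + Δβ k ω| * ((T / N) / (ε ^ 2 + T / N)) := by
          rw [I1 ε hε k ω, abs_mul,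
            abs_of_nonneg (by positivity : (0:ℝ) ≤ (T / N) / (ε ^ 2 + T / N))]
      _ ≤ |ε * mD ε k ω + Δβ k ω| * 1 := mul_le_mul_of_nonneg_left hfac (abs_nonneg _)
      _ ≤ ε * |mD ε k ω| + |Δβ k ω| := by
          rw [mul_one]
          refine (abs_add_le _ _).trans ?_
          rw [abs_mul, abs_of_pos hε.1]
      _ ≤ (ε₀ * M0 + ∑ j ∈ Finset.range k, |Δβ j ω|) + |Δβ k ω| :=
          add_le_add_left (hEm ε hε ω k) _
      _ = ε₀ * M0 + ∑ j ∈ Finset.range (k + 1), |Δβ j ω| := by rw [Finset.sum_range_succ]; ring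
      _ ≤ B ω := by
          rw [hB]
          exact add_le_add_right (hsumS ω (k + 1) hk) _
  have hΔβB : ∀ ω k, k < N → |Δβ k ω| ≤ B ω := by
    intro ω k hk
    have h1 : |Δβ k ω| ≤ S ω := by
      rw [hS]
      exact Finset.single_le_sum (fun i _ => abs_nonneg (Δβ i ω)) (Finset.mem_range.mpr hk)
    have h2 : 0 ≤ ε₀ * M0 := by positivity
    rw [hB]
    linarith
  -- domination
  have hkey : ∀ k, k ≤ N → ∃ A a : ℝ, 0 ≤ A ∧ 0 ≤ a ∧
      ∀ ε ∈ Ioo (0:ℝ) ε₀, ‖x0 ε - x00‖ ≤ 1 → ∀ ω,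
        ‖XD ε k ω - XD0 k ω‖ ≤ A * Real.exp (a * B ω) := by
    intro k
    induction k with
    | zero =>
      intro _
      refine ⟨1, 0, zero_le_one, le_refl 0, fun ε hε hx ω => ?_⟩
      rw [hXD0 ε hε ω, hXD00 ω]
      simpa using hx
    | succ k ih =>
      intro hk
      obtain ⟨A, a, hA, ha, hb⟩ := ih (le_of_lt (Nat.lt_of_succ_le hk))
      refine ⟨(C + 1) * (2 + A), a + 1 + 2 * C, by positivity, by positivity,
        fun ε hε hx ω => ?_⟩
      have hkN : k < N := Nat.lt_of_succ_le hk
      have hbB : 0 ≤ B ω := hB0 ω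
      have h1 : |(T / N) * mD ε (k + 1) ω / ε| ≤ B ω := htb ε hε ω k hkN
      have h2 : |Δβ k ω| ≤ B ω := hΔβB ω k hkN
      have h3 : ‖XD ε k ω - XD0 k ω‖ ≤ A * Real.exp (a * B ω) := hb ε hε hx ω
      have eB : B ω ≤ Real.exp ((a + 1) * B ω) := by
        have e1 : B ω + 1 ≤ (a + 1) * B ω + 1 := by nlinarith
        linarith [Real.add_one_le_exp ((a + 1) * B ω)]
      have eaB : Real.exp (a * B ω) ≤ Real.exp ((a + 1) * B ω) :=
        Real.exp_le_exp.mpr (by nlinarith)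
      rw [hXD ε hε k ω, hXD0rec k ω, ← hΔβ k ω]
      calc ‖Φ ((T / N) * mD ε (k + 1) ω / ε) (XD ε k ω) - Φ (Δβ k ω) (XD0 k ω)‖
          ≤ C * (|(T / N) * mD ε (k + 1) ω / ε - Δβ k ω| + ‖XD ε k ω - XD0 k ω‖)
              * Real.exp (C * (|Δβ k ω| + |(T / N) * mD ε (k + 1) ω / ε|)) :=
            hΦlip (Δβ k ω) ((T / N) * mD ε (k + 1) ω / ε) (XD0 k ω) (XD ε k ω)
        _ ≤ C * ((B ω + B ω) + A * Real.exp (a * B ω)) * Real.exp (C * (B ω + B ω)) := by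
            have habs : |(T / N) * mD ε (k + 1) ω / ε - Δβ k ω| ≤ B ω + B ω :=
              (abs_sub _ _).trans (add_le_add h1 h2)
            have hE : Real.exp (C * (|Δβ k ω| + |(T / N) * mD ε (k + 1) ω / ε|))
                ≤ Real.exp (C * (B ω + B ω)) :=
              Real.exp_le_exp.mpr (mul_le_mul_of_nonneg_left (add_le_add h2 h1) hCpos.le)
            have hIn : C * (|(T / N) * mD ε (k + 1) ω / ε - Δβ k ω| + ‖XD ε k ω - XD0 k ω‖)
                ≤ C * ((B ω + B ω) + A * Real.exp (a * B ω)) :=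
              mul_le_mul_of_nonneg_left (add_le_add habs h3) hCpos.le
            exact mul_le_mul hIn hE (Real.exp_pos _).le (by positivity)
        _ ≤ C * ((2 + A) * Real.exp ((a + 1) * B ω)) * Real.exp (C * (B ω + B ω)) := by
            have h4 : (B ω + B ω) + A * Real.exp (a * B ω)
                ≤ (2 + A) * Real.exp ((a + 1) * B ω) := by nlinarith
            exact mul_le_mul_of_nonneg_right
              (mul_le_mul_of_nonneg_left h4 hCpos.le) (Real.exp_pos _).le
        _ = (C * (2 + A)) * Real.exp ((a + 1) * B ω + C * (B ω + B ω)) := by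
            rw [Real.exp_add]; ring
        _ = (C * (2 + A)) * Real.exp ((a + 1 + 2 * C) * B ω) := by
            rw [show (a + 1) * B ω + C * (B ω + B ω) = (a + 1 + 2 * C) * B ω from by ring]
        _ ≤ ((C + 1) * (2 + A)) * Real.exp ((a + 1 + 2 * C) * B ω) := by
            have := (Real.exp_pos ((a + 1 + 2 * C) * B ω)).le
            nlinarith
  obtain ⟨A, a, hA, ha, hAB⟩ := hkey n hn
  -- integrability of exponentials of `B`
  have hSm : Measurable S := by
    have h : S = fun ω => ∑ k ∈ Finset.range N, |Δβ k ω| := funext hS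
    rw [h]
    exact Finset.measurable_sum _ fun k _ => (hΔβm k).abs
  have hBm : Measurable B := by
    have h : B = fun ω => ε₀ * M0 + S ω := funext hB
    rw [h]
    exact measurable_const.add hSm
  have hintexp : ∀ c : ℝ, 0 ≤ c → Integrable (fun ω => Real.exp (c * B ω)) P := by
    intro c hc
    have hint1 : ∀ k, k < N → Integrable (fun ω => Real.exp (c * N * |Δβ k ω|)) P := by
      intro k hk
      have hs0 : (0:ℝ) ≤ (k : ℝ) * (T / N) := by positivity
      have hst : (k : ℝ) * (T / N) ≤ ((k : ℝ) + 1) * (T / N) := by nlinarith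
      have hmap := hβgauss ((k : ℝ) * (T / N)) (((k : ℝ) + 1) * (T / N)) hs0 hst
      have hvpos : (0:ℝ) < ((k : ℝ) + 1) * (T / N) - (k : ℝ) * (T / N) := by nlinarith
      have hv : Real.toNNReal (((k : ℝ) + 1) * (T / N) - (k : ℝ) * (T / N)) ≠ 0 :=
        ne_of_gt (Real.toNNReal_pos.mpr hvpos)
      have hg := integrable_exp_mul_abs_gaussianReal' (c * N) 0 hv
      rw [← hmap] at hg
      have hgm : AEStronglyMeasurable (fun x : ℝ => Real.exp (c * N * |x|))
          (Measure.map (fun ω => β (((k : ℝ) + 1) * (T / N)) ω - β ((k : ℝ) * (T / N)) ω) P) :=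
        ((Real.continuous_exp.comp (continuous_const.mul continuous_abs))).aestronglyMeasurable
      have hfm : AEMeasurable
          (fun ω => β (((k : ℝ) + 1) * (T / N)) ω - β ((k : ℝ) * (T / N)) ω) P :=
        ((hβmeas _).sub (hβmeas _)).aemeasurable
      have hco := (integrable_map_measure hgm hfm).mp hg
      have heq : (fun ω => Real.exp (c * N * |Δβ k ω|))
          = (fun x : ℝ => Real.exp (c * N * |x|))
            ∘ (fun ω => β (((k : ℝ) + 1) * (T / N)) ω - β ((k : ℝ) * (T / N)) ω) :=
        funext fun ω => by rw [Function.comp_apply, hΔβ k ω]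
      rw [heq]
      exact hco
    have hmaj : Integrable (fun ω => ∑ k ∈ Finset.range N, Real.exp (c * N * |Δβ k ω|)) P :=
      integrable_finset_sum _ fun k hk => hint1 k (Finset.mem_range.mp hk)
    refine ((hmaj.const_mul (Real.exp (c * (ε₀ * M0)))).mono' ?_
      (Filter.Eventually.of_forall fun ω => ?_))
    · exact (Real.continuous_exp.measurable.comp (hBm.const_mul c)).aestronglyMeasurable
    · rw [Real.norm_of_nonneg (Real.exp_pos _).le]
      have hne : (Finset.range N).Nonempty := ⟨0, Finset.mem_range.mpr (by omega)⟩
      obtain ⟨j, hj, hmax⟩ := Finset.exists_max_image (Finset.range N) (fun k => |Δβ k ω|) hne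
      have hsle : S ω ≤ (N : ℝ) * |Δβ j ω| := by
        rw [hS]
        calc ∑ k ∈ Finset.range N, |Δβ k ω| ≤ (Finset.range N).card • |Δβ j ω| :=
              Finset.sum_le_card_nsmul _ _ _ fun x hx => hmax x hx
          _ = (N : ℝ) * |Δβ j ω| := by rw [Finset.card_range, nsmul_eq_mul]
      have hBle : c * B ω ≤ c * N * |Δβ j ω| + c * (ε₀ * M0) := by
        rw [hB]
        nlinarith
      calc Real.exp (c * B ω) ≤ Real.exp (c * N * |Δβ j ω| + c * (ε₀ * M0)) :=
            Real.exp_le_exp.mpr hBle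
        _ = Real.exp (c * (ε₀ * M0)) * Real.exp (c * N * |Δβ j ω|) := by
            rw [← Real.exp_add]; ring_nf
        _ ≤ Real.exp (c * (ε₀ * M0)) * ∑ k ∈ Finset.range N, Real.exp (c * N * |Δβ k ω|) := by
            refine mul_le_mul_of_nonneg_left ?_ (Real.exp_pos _).le
            exact Finset.single_le_sum (f := fun k => Real.exp (c * N * |Δβ k ω|))
              (fun i _ => (Real.exp_pos _).le) hj
  -- integrability of the dominating function
  have hbound_int : Integrable (fun ω => (A * Real.exp (a * B ω)) ^ p) P := by
    have heq : (fun ω => (A * Real.exp (a * B ω)) ^ p)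
        = fun ω => A ^ p * Real.exp ((a * p) * B ω) := by
      funext ω
      rw [Real.mul_rpow hA (Real.exp_pos _).le, ← Real.exp_mul]
      rw [show a * B ω * p = a * p * B ω from by ring]
    rw [heq]
    exact ((hintexp (a * p) (by positivity)).const_mul _)
  -- pointwise convergence
  have hεm : ∀ ω k, Tendsto (fun ε => ε * mD ε k ω) l (nhds 0) := by
    intro ω k
    induction k with
    | zero =>
      have hg : Tendsto (fun ε : ℝ => ε * M0) l (nhds 0) := by
        have h := (continuous_id.mul (continuous_const : Continuous fun _ : ℝ => M0)).tendsto 0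
        simp only [Pi.mul_apply, id_eq, zero_mul] at h
        exact h.mono_left nhdsWithin_le_nhds
      refine squeeze_zero_norm' ?_ hg
      refine hmem.mono fun ε hε => ?_
      rw [hmD0 ε hε ω, Real.norm_eq_abs, abs_mul, abs_of_pos hε.1]
      exact mul_le_mul_of_nonneg_left (hm0 ε hε) hε.1.le
    | succ k ih =>
      have heq : ∀ᶠ ε in l,
          (ε * mD ε k ω + Δβ k ω) * (ε ^ 2 / (ε ^ 2 + T / N)) = ε * mD ε (k + 1) ω :=
        hmem.mono fun ε hε => (I2 ε hε k ω).symm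
      have hden : Tendsto (fun ε : ℝ => ε ^ 2 + T / N) l (nhds (T / N)) := by
        have h := ((continuous_pow 2).add
          (continuous_const : Continuous fun _ : ℝ => T / N)).tendsto (0 : ℝ)
        simp only [Pi.add_apply] at h
        rw [show (0:ℝ) ^ 2 + T / N = T / N from by norm_num] at h
        exact h.mono_left nhdsWithin_le_nhds
      have hnum : Tendsto (fun ε : ℝ => ε ^ 2) l (nhds 0) := by
        have h := (continuous_pow 2).tendsto (0 : ℝ)
        rw [show (0:ℝ) ^ 2 = 0 from by norm_num] at h
        exact h.mono_left nhdsWithin_le_nhds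
      have hfac : Tendsto (fun ε : ℝ => ε ^ 2 / (ε ^ 2 + T / N)) l (nhds 0) := by
        have h := hnum.div hden (ne_of_gt hΔt)
        rwa [zero_div] at h
      have h := (ih.add (tendsto_const_nhds : Tendsto (fun _ : ℝ => Δβ k ω) l _)).mul hfac
      rw [zero_add, mul_zero] at h
      exact Tendsto.congr' heq h
  have htc : ∀ ω k, Tendsto (fun ε => (T / N) * mD ε (k + 1) ω / ε) l (nhds (Δβ k ω)) := by
    intro ω k
    have heq : ∀ᶠ ε in l,
        (ε * mD ε k ω + Δβ k ω) * ((T / N) / (ε ^ 2 + T / N)) = (T / N) * mD ε (k + 1) ω / ε :=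
      hmem.mono fun ε hε => (I1 ε hε k ω).symm
    have hden : Tendsto (fun ε : ℝ => ε ^ 2 + T / N) l (nhds (T / N)) := by
      have h := ((continuous_pow 2).add
        (continuous_const : Continuous fun _ : ℝ => T / N)).tendsto (0 : ℝ)
      simp only [Pi.add_apply] at h
      rw [show (0:ℝ) ^ 2 + T / N = T / N from by norm_num] at h
      exact h.mono_left nhdsWithin_le_nhds
    have hfac : Tendsto (fun ε : ℝ => (T / N) / (ε ^ 2 + T / N)) l (nhds 1) := by
      have h := (tendsto_const_nhds : Tendsto (fun _ : ℝ => T / N) l _).div hden (ne_of_gt hΔt)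
      rwa [div_self (ne_of_gt hΔt)] at h
    have h := ((hεm ω k).add (tendsto_const_nhds : Tendsto (fun _ : ℝ => Δβ k ω) l _)).mul hfac
    rw [zero_add, mul_one] at h
    exact Tendsto.congr' heq h
  have hXc : ∀ ω k, Tendsto (fun ε => XD ε k ω) l (nhds (XD0 k ω)) := by
    intro ω k
    induction k with
    | zero =>
      have heq : ∀ᶠ ε in l, x0 ε = XD ε 0 ω := hmem.mono fun ε hε => (hXD0 ε hε ω).symm
      rw [hXD00 ω]
      exact Tendsto.congr' heq hx0
    | succ k ih =>
      have heq : ∀ᶠ ε in l,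
          Φ ((T / N) * mD ε (k + 1) ω / ε) (XD ε k ω) = XD ε (k + 1) ω :=
        hmem.mono fun ε hε => (hXD ε hε k ω).symm
      have hpair : Tendsto (fun ε => ((T / N) * mD ε (k + 1) ω / ε, XD ε k ω)) l
          (nhds (Δβ k ω, XD0 k ω)) := (htc ω k).prodMk_nhds ih
      have h := (hΦc.tendsto (Δβ k ω, XD0 k ω)).comp hpair
      rw [hXD0rec k ω, ← hΔβ k ω]
      exact Tendsto.congr' heq h
  -- dominated convergence
  have hx1 : ∀ᶠ ε in l, ‖x0 ε - x00‖ ≤ 1 := by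
    have h : ∀ᶠ y in nhds x00, ‖y - x00‖ ≤ 1 := by
      have : Metric.closedBall x00 1 ∈ nhds x00 := Metric.closedBall_mem_nhds x00 one_pos
      refine Filter.eventually_of_mem this fun y hy => ?_
      rw [← dist_eq_norm]
      exact hy
    exact hx0.eventually h
  have hI : Tendsto (fun ε : ℝ => ∫ ω, ‖XD ε n ω - XD0 n ω‖ ^ p ∂P) l (nhds 0) := by
    have h := tendsto_integral_filter_of_dominated_convergence
      (l := l) (μ := P) (F := fun ε ω => ‖XD ε n ω - XD0 n ω‖ ^ p) (f := fun _ => (0:ℝ))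
      (bound := fun ω => (A * Real.exp (a * B ω)) ^ p)
      ?_ ?_ hbound_int ?_
    · rwa [integral_zero] at h
    · refine hmem.mono fun ε hε => ?_
      have hm : Measurable fun ω => ‖XD ε n ω - XD0 n ω‖ ^ p :=
        (Real.continuous_rpow_const (le_of_lt hp0)).measurable.comp
          ((hXDm ε hε n).sub (hXD0m n)).norm
      exact hm.aestronglyMeasurable
    · filter_upwards [hmem, hx1] with ε hε hx
      refine Filter.Eventually.of_forall fun ω => ?_
      rw [Real.norm_of_nonneg (Real.rpow_nonneg (norm_nonneg _) p)]
      exact Real.rpow_le_rpow (norm_nonneg _) (hAB ε hε hx ω) (le_of_lt hp0)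
    · refine Filter.Eventually.of_forall fun ω => ?_
      have h1 : Tendsto (fun ε => ‖XD ε n ω - XD0 n ω‖) l (nhds 0) := by
        have h := ((hXc ω n).sub (tendsto_const_nhds : Tendsto (fun _ : ℝ => XD0 n ω) l _)).norm
        rwa [sub_self, norm_zero] at h
      have h2 := h1.rpow_const (Or.inr (le_of_lt hp0))
      rwa [Real.zero_rpow (ne_of_gt hp0)] at h2
  have hfinal := hI.rpow_const (Or.inr (by positivity : (0:ℝ) ≤ 1 / p))
  rwa [Real.zero_rpow (by positivity : (1:ℝ) / p ≠ 0)] at hfinal
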